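/- Fix d ≥ 1 and λ, μ ∈ W^d. Then the exponential generating function of Weyl oscillating lattice walks from λ to μ satisfies Σ_{n≥0} b_n(λ;μ) t^n/n! = det( I_{μ_i−λ_j}(2t) − I_{μ_i+λ_j}(2t) )_{1≤i,j≤d} as formal power series in t over ℚ; equivalently, for every n ≥ 0, b_n(λ;μ) equals n! times the coefficient of t^n in that d×d determinant. -/

import Mathlib

open scoped BigOperators

/-- The `d`-dimensional Weyl chamber `W^d = {x ∈ ℤ^d : x₁ > x₂ > ⋯ > x_d > 0}`. -/
def WeylChamber (d : ℕ) : Set (Fin d → ℤ) :=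
  {x | (∀ i j : Fin d, i < j → x j < x i) ∧ ∀ i, 0 < x i}

/-- `q` is obtained from `p` by adding a positive or negative unit coordinate vector. -/
def IsUnitStep {d : ℕ} (p q : Fin d → ℤ) : Prop :=
  ∃ i : Fin d, q = p + Pi.single i 1 ∨ q = p - Pi.single i 1

/-- The number `b_n(λ;μ)` of Weyl oscillating lattice walks of length `n` from `lam`
to `mu`: sequences `lam = p⁰, p¹, …, pⁿ = mu` of points of `W^d` in which each
difference `p^{k+1} - p^k` is a positive or negative unit coordinate vector. -/
noncomputable def oscWalkCount (d n : ℕ) (lam mu : Fin d → ℤ) : ℕ :=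
  Nat.card {p : Fin (n + 1) → (Fin d → ℤ) //
    p 0 = lam ∧ p (Fin.last n) = mu ∧ (∀ k, p k ∈ WeylChamber d) ∧
    ∀ k : Fin n, IsUnitStep (p k.castSucc) (p k.succ)}

/-- The hyperbolic Bessel function of the first kind `I_s(2t)`, as a formal power
series in `t` over `ℚ`:  `I_s(2t) = Σ_{k,m ≥ 0, m - k = s} t^{m+k}/(m! k!)`,
i.e. the coefficient of `z^s` in `exp(t(z + z⁻¹))`. -/
noncomputable def besselI (s : ℤ) : PowerSeries ℚ :=
  PowerSeries.mk fun n =>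
    ∑ k ∈ Finset.range (n + 1),
      if ((n - k : ℕ) : ℤ) - (k : ℤ) = s then
        (1 : ℚ) / ((n - k).factorial * k.factorial) else 0


open PowerSeries Finset

lemma coeff_besselI (n : ℕ) (s : ℤ) : coeff (R := ℚ) n (besselI s) =
    ∑ k ∈ Finset.range (n+1), if ((n:ℤ) - 2*k = s) then (1:ℚ)/((n-k).factorial * k.factorial) else 0 := by
  rw [besselI, coeff_mk]
  refine Finset.sum_congr rfl fun k hk => ?_
  have hk' : k ≤ n := by simpa [Nat.lt_succ_iff] using hk
  refine if_congr ?_ rfl rfl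
  rw [Nat.cast_sub hk']
  omega

lemma besselI_neg (s : ℤ) : besselI (-s) = besselI s := by
  ext n
  rw [coeff_besselI, coeff_besselI]
  rw [← Finset.sum_range_reflect]
  refine Finset.sum_congr rfl fun k hk => ?_
  have hk' : k ≤ n := by simpa [Nat.lt_succ_iff] using hk
  have h1 : n + 1 - 1 - k = n - k := by omega
  rw [h1]
  refine if_congr ?_ ?_ rfl
  · constructor <;> intro h <;> omega
  · have : n - (n - k) = k := by omega
    rw [this, mul_comm]


lemma derivative_besselI (s : ℤ) :
    PowerSeries.derivative ℚ (besselI s) = besselI (s-1) + besselI (s+1) := by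
  ext n
  rw [PowerSeries.coeff_derivative, map_add, coeff_besselI, coeff_besselI, coeff_besselI,
    Finset.sum_mul]
  have hsplit : ∀ k ∈ range (n+1+1),
      (if ((n+1:ℕ):ℤ) - 2*k = s then (1:ℚ)/((n+1-k).factorial * k.factorial) else 0) * ((n:ℚ)+1)
      = (if ((n+1:ℕ):ℤ) - 2*k = s then ((n+1-k:ℕ):ℚ)/((n+1-k).factorial * k.factorial) else 0)
        + (if ((n+1:ℕ):ℤ) - 2*k = s then ((k:ℕ):ℚ)/((n+1-k).factorial * k.factorial) else 0) := by
    intro k hk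
    have hk' : k ≤ n + 1 := by simpa [Nat.lt_succ_iff] using hk
    split_ifs with h
    · rw [← add_div]
      have h5 : ((n+1-k:ℕ):ℚ) + (k:ℚ) = (n:ℚ) + 1 := by
        have h6 : ((n+1-k:ℕ):ℚ) = ((n+1:ℕ):ℚ) - (k:ℚ) := by
          rw [Nat.cast_sub hk']
        rw [h6]; push_cast; ring
      rw [h5, one_div_mul_eq_div]
    · simp
  rw [Finset.sum_congr rfl hsplit, Finset.sum_add_distrib]
  congr 1
  · -- first sum = besselI (s-1) coefficient sum
    rw [Finset.sum_range_succ]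
    simp only [Nat.sub_self, Nat.cast_zero, zero_div, ite_self, add_zero]
    refine Finset.sum_congr rfl fun k hk => ?_
    have hk' : k ≤ n := by simpa [Nat.lt_succ_iff] using hk
    have hcond : (((n+1:ℕ):ℤ) - 2*k = s) ↔ ((n:ℤ) - 2*k = s - 1) := by push_cast; omega
    rw [if_congr hcond rfl rfl]
    refine if_congr Iff.rfl ?_ rfl
    have h1 : n + 1 - k = (n-k) + 1 := by omega
    rw [h1, Nat.factorial_succ]
    have h2 : ((n-k).factorial : ℚ) ≠ 0 := Nat.cast_ne_zero.mpr (Nat.factorial_ne_zero _)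
    have h3 : (k.factorial : ℚ) ≠ 0 := Nat.cast_ne_zero.mpr (Nat.factorial_ne_zero _)
    have h4 : ((n-k:ℕ):ℚ) + 1 ≠ 0 := by positivity
    push_cast
    field_simp
  · -- second sum
    rw [Finset.sum_range_succ']
    simp only [Nat.cast_zero, zero_div, ite_self, add_zero]
    refine Finset.sum_congr rfl fun k hk => ?_
    have hk' : k ≤ n := by simpa [Nat.lt_succ_iff] using hk
    have hcond : (((n+1:ℕ):ℤ) - 2*((k+1:ℕ):ℤ) = s) ↔ ((n:ℤ) - 2*(k:ℤ) = s + 1) := by push_cast; omega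
    rw [if_congr hcond rfl rfl]
    refine if_congr Iff.rfl ?_ rfl
    have h1 : n + 1 - (k+1) = n - k := by omega
    rw [h1, Nat.factorial_succ]
    have h2 : ((n-k).factorial : ℚ) ≠ 0 := Nat.cast_ne_zero.mpr (Nat.factorial_ne_zero _)
    have h3 : (k.factorial : ℚ) ≠ 0 := Nat.cast_ne_zero.mpr (Nat.factorial_ne_zero _)
    have h4 : ((k:ℕ):ℚ) + 1 ≠ 0 := by positivity
    push_cast
    field_simp


variable {R A : Type*} [CommRing A] [CommRing R] [Algebra R A]

lemma deriv_prod (D : Derivation R A A) {ι : Type*} [DecidableEq ι] (s : Finset ι) (f : ι → A) :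
    D (∏ i ∈ s, f i) = ∑ i ∈ s, (∏ j ∈ s.erase i, f j) * D (f i) := by
  classical
  induction s using Finset.induction_on with
  | empty => simp
  | @insert a s ha ih =>
    rw [Finset.prod_insert ha, D.leibniz, Finset.sum_insert ha, Finset.erase_insert ha]
    simp only [smul_eq_mul, ih, Finset.mul_sum]
    rw [add_comm]
    congr 1
    refine Finset.sum_congr rfl fun i hi => ?_
    rw [Finset.erase_insert_of_ne (by rintro rfl; exact ha hi),
      Finset.prod_insert (fun h => ha (Finset.mem_of_mem_erase h))]
    ring

lemma deriv_det (D : Derivation R A A) {d : ℕ} (M : Matrix (Fin d) (Fin d) A) :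
    D M.det = ∑ r : Fin d, (M.updateRow r fun j => D (M r j)).det := by
  classical
  rw [Matrix.det_apply', map_sum]
  have lhs : ∀ σ : Equiv.Perm (Fin d),
      D (Equiv.Perm.sign σ * ∏ i, M (σ i) i)
      = Equiv.Perm.sign σ * ∑ i : Fin d, (∏ j ∈ Finset.univ.erase i, M (σ j) j) * D (M (σ i) i) := by
    intro σ
    rw [D.leibniz, Derivation.map_intCast, smul_zero, add_zero, smul_eq_mul,
      deriv_prod]
  rw [Finset.sum_congr rfl fun σ _ => lhs σ]
  have rhs : ∀ r : Fin d, (M.updateRow r fun j => D (M r j)).det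
      = ∑ σ : Equiv.Perm (Fin d), Equiv.Perm.sign σ *
          ∏ i, (if σ i = r then D (M r i) else M (σ i) i) := by
    intro r
    rw [Matrix.det_apply']
    refine Finset.sum_congr rfl fun σ _ => ?_
    congr 1
    refine Finset.prod_congr rfl fun i _ => ?_
    rw [Matrix.updateRow_apply]
  rw [Finset.sum_congr rfl fun r _ => rhs r, Finset.sum_comm]
  refine Finset.sum_congr rfl fun σ _ => ?_
  rw [← Finset.mul_sum]
  congr 1
  rw [← Equiv.sum_comp σ (fun r => ∏ i, (if σ i = r then D (M r i) else M (σ i) i))]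
  refine Finset.sum_congr rfl fun i₀ _ => ?_
  have hprod : ∀ i : Fin d, (if σ i = σ i₀ then D (M (σ i₀) i) else M (σ i) i)
      = (if i = i₀ then D (M (σ i) i) else M (σ i) i) := by
    intro i
    by_cases h : i = i₀
    · subst h; simp
    · rw [if_neg (fun hc => h (σ.injective hc)), if_neg h]
  rw [Finset.prod_congr rfl fun i _ => hprod i]
  rw [← Finset.mul_prod_erase _ _ (Finset.mem_univ i₀), if_pos rfl]
  rw [Finset.prod_congr rfl (fun j hj => if_neg (Finset.ne_of_mem_erase hj)), mul_comm]


def Walks (d n : ℕ) (lam mu : Fin d → ℤ) :=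
  {p : Fin (n + 1) → (Fin d → ℤ) //
    p 0 = lam ∧ p (Fin.last n) = mu ∧ (∀ k, p k ∈ WeylChamber d) ∧
    ∀ k : Fin n, IsUnitStep (p k.castSucc) (p k.succ)}

/-- the set of possible steps -/
def StepSet (d : ℕ) : Set (Fin d → ℤ) :=
  Set.range (fun x : Fin d × Bool => if x.2 then Pi.single x.1 1 else -Pi.single x.1 1)

instance walksFinite (d n : ℕ) (lam mu : Fin d → ℤ) : Finite (Walks d n lam mu) := by
  have hS : (StepSet d).Finite := Set.finite_range _
  have : Finite (StepSet d) := hS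
  refine Finite.of_injective
    (fun p : Walks d n lam mu => fun k : Fin n =>
      (⟨p.1 k.succ - p.1 k.castSucc, ?_⟩ : StepSet d)) ?_
  · obtain ⟨i, h | h⟩ := p.2.2.2.2 k
    · exact ⟨(i, true), by simp [h]⟩
    · exact ⟨(i, false), by simp only [if_neg Bool.false_ne_true, h]; abel⟩
  · intro p q hpq
    apply Subtype.ext
    funext k
    induction k using Fin.induction with
    | zero => rw [p.2.1, q.2.1]
    | succ k ih =>
      have h1 : p.1 k.succ - p.1 k.castSucc = q.1 k.succ - q.1 k.castSucc := by
        have := congrFun hpq k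
        exact congrArg Subtype.val this
      have h2 : p.1 k.succ = p.1 k.castSucc + (p.1 k.succ - p.1 k.castSucc) := by abel
      rw [h2, h1, ih]
      abel

lemma card_walks_zero (d : ℕ) (lam mu : Fin d → ℤ) (hlam : lam ∈ WeylChamber d) :
    Nat.card (Walks d 0 lam mu) = if lam = mu then 1 else 0 := by
  split_ifs with h
  · subst h
    have : Unique (Walks d 0 lam lam) := by
      refine ⟨⟨⟨fun _ => lam, rfl, rfl, fun _ => hlam, fun k => k.elim0⟩⟩, ?_⟩
      rintro ⟨p, h0, hl, hc, hs⟩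
      apply Subtype.ext
      funext k
      have : k = 0 := by ext; omega
      rw [this]; exact h0
    exact Nat.card_unique
  · have : IsEmpty (Walks d 0 lam mu) := by
      constructor
      rintro ⟨p, h0, hl, -, -⟩
      exact h (h0 ▸ hl ▸ rfl)
    exact Nat.card_of_isEmpty

lemma card_walks_notmem (d n : ℕ) (lam mu : Fin d → ℤ) (hmu : mu ∉ WeylChamber d) :
    Nat.card (Walks d n lam mu) = 0 := by
  have : IsEmpty (Walks d n lam mu) := by
    constructor
    rintro ⟨p, -, hl, hc, -⟩
    exact hmu (hl ▸ hc (Fin.last n))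
  exact Nat.card_of_isEmpty

def nbr (d : ℕ) (mu : Fin d → ℤ) (x : Fin d × Bool) : Fin d → ℤ :=
  if x.2 then mu + Pi.single x.1 1 else mu - Pi.single x.1 1

lemma nbr_injective (d : ℕ) (mu : Fin d → ℤ) : Function.Injective (nbr d mu) := by
  rintro ⟨i, bi⟩ ⟨j, bj⟩ h
  have hi := congrFun h i
  cases bi <;> cases bj <;>
    simp only [nbr, Pi.add_apply, Pi.sub_apply, Pi.single_apply, if_true, if_false,
      Bool.false_eq_true, ite_true, ite_false] at hi
  · split_ifs at hi with h1
    · rw [h1]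
    · omega
  · exfalso; split_ifs at hi <;> omega
  · exfalso; split_ifs at hi <;> omega
  · split_ifs at hi with h1
    · rw [h1]
    · omega

lemma nbr_isUnitStep (d : ℕ) (mu : Fin d → ℤ) (x : Fin d × Bool) :
    IsUnitStep (nbr d mu x) mu := by
  obtain ⟨i, b⟩ := x
  cases b
  · exact ⟨i, Or.inl (by simp [nbr])⟩
  · exact ⟨i, Or.inr (by simp [nbr])⟩

lemma exists_nbr (d n : ℕ) (lam mu : Fin d → ℤ) (p : Walks d (n+1) lam mu) :
    ∃ x : Fin d × Bool, p.1 ((Fin.last n).castSucc) = nbr d mu x := by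
  obtain ⟨q, h0, hl, hc, hs⟩ := p
  obtain ⟨i, h | h⟩ := hs (Fin.last n)
  · refine ⟨(i, false), ?_⟩
    have hsucc : q (Fin.last n).succ = mu := by rw [Fin.succ_last]; exact hl
    rw [hsucc] at h
    show q (Fin.last n).castSucc = mu - Pi.single i 1
    rw [h]; abel
  · refine ⟨(i, true), ?_⟩
    have hsucc : q (Fin.last n).succ = mu := by rw [Fin.succ_last]; exact hl
    rw [hsucc] at h
    show q (Fin.last n).castSucc = mu + Pi.single i 1
    rw [h]; abel

def truncEquiv (d n : ℕ) (lam mu ν : Fin d → ℤ) (hstep : IsUnitStep ν mu)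
    (hmu : mu ∈ WeylChamber d) :
    {p : Walks d (n+1) lam mu // p.1 ((Fin.last n).castSucc) = ν} ≃ Walks d n lam ν where
  toFun p := ⟨Fin.init p.1.1, by
    refine ⟨?_, ?_, fun k => p.1.2.2.2.1 _, fun k => ?_⟩
    · have h00 : (0 : Fin (n+1+1)) = Fin.castSucc 0 := by ext; simp
      show p.1.1 (Fin.castSucc (0 : Fin (n+1))) = lam
      rw [← h00]; exact p.1.2.1
    · exact p.2
    · show IsUnitStep (p.1.1 (Fin.castSucc (Fin.castSucc k))) (p.1.1 (Fin.castSucc k.succ))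
      rw [← Fin.succ_castSucc]
      exact p.1.2.2.2.2 k.castSucc⟩
  invFun q := ⟨⟨Fin.snoc q.1 mu, by
    refine ⟨?_, ?_, ?_, ?_⟩
    · have h00 : (0 : Fin (n+1+1)) = Fin.castSucc 0 := by ext; simp
      rw [h00, Fin.snoc_castSucc]; exact q.2.1
    · exact Fin.snoc_last _ _
    · intro k
      induction k using Fin.lastCases with
      | last => rw [Fin.snoc_last]; exact hmu
      | cast j => rw [Fin.snoc_castSucc]; exact q.2.2.2.1 j
    · intro k
      induction k using Fin.lastCases with
      | last =>
        rw [Fin.succ_last, Fin.snoc_last, Fin.snoc_castSucc, q.2.2.1]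
        exact hstep
      | cast j =>
        rw [Fin.succ_castSucc, Fin.snoc_castSucc, Fin.snoc_castSucc]
        exact q.2.2.2.2 j⟩, by
    exact (Fin.snoc_castSucc (α := fun _ => (Fin d → ℤ)) mu q.1 (Fin.last n)).trans q.2.2.1⟩
  left_inv p := by
    apply Subtype.ext; apply Subtype.ext
    show Fin.snoc (Fin.init p.1.1) mu = p.1.1
    have h := Fin.snoc_init_self p.1.1
    rw [p.1.2.2.1] at h
    exact h
  right_inv q := by
    apply Subtype.ext
    exact Fin.init_snoc (α := fun _ => (Fin d → ℤ)) mu q.1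

lemma card_walks_succ (d n : ℕ) (lam mu : Fin d → ℤ) (hmu : mu ∈ WeylChamber d) :
    Nat.card (Walks d (n+1) lam mu) =
      ∑ i : Fin d, (Nat.card (Walks d n lam (mu + Pi.single i 1))
        + Nat.card (Walks d n lam (mu - Pi.single i 1))) := by
  classical
  have hchoice : ∀ p : Walks d (n+1) lam mu,
      p.1 ((Fin.last n).castSucc) = nbr d mu (exists_nbr d n lam mu p).choose :=
    fun p => (exists_nbr d n lam mu p).choose_spec
  set c : Walks d (n+1) lam mu → Fin d × Bool := fun p => (exists_nbr d n lam mu p).choose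
  have e1 : Walks d (n+1) lam mu ≃ Σ x : Fin d × Bool, {p : Walks d (n+1) lam mu // c p = x} :=
    (Equiv.sigmaFiberEquiv c).symm
  have e2 : ∀ x : Fin d × Bool, {p : Walks d (n+1) lam mu // c p = x}
      ≃ Walks d n lam (nbr d mu x) := by
    intro x
    refine (Equiv.subtypeEquivRight fun p => ?_).trans
      (truncEquiv d n lam mu (nbr d mu x) (nbr_isUnitStep d mu x) hmu)
    constructor
    · rintro rfl; exact hchoice p
    · intro h
      exact nbr_injective d mu (((hchoice p).symm.trans h))
  have hcards : Nat.card (Walks d (n+1) lam mu)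
      = ∑ x : Fin d × Bool, Nat.card (Walks d n lam (nbr d mu x)) := by
    rw [Nat.card_congr e1]
    letI : ∀ x : Fin d × Bool, Fintype {p : Walks d (n+1) lam mu // c p = x} :=
      fun x => Fintype.ofFinite _
    rw [Nat.card_eq_fintype_card, Fintype.card_sigma]
    refine Finset.sum_congr rfl fun x _ => ?_
    rw [← Nat.card_eq_fintype_card, Nat.card_congr (e2 x)]
  rw [hcards, Fintype.sum_prod_type]
  refine Finset.sum_congr rfl fun i _ => ?_
  rw [Fintype.sum_bool]
  have h1 : nbr d mu (i, true) = mu + Pi.single i 1 := by simp [nbr]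
  have h2 : nbr d mu (i, false) = mu - Pi.single i 1 := by simp [nbr]
  rw [h1, h2]


lemma not_mem_add {d : ℕ} {mu nu : Fin d → ℤ} (hmu : mu ∈ WeylChamber d) (r : Fin d)
    (hnu : nu = mu + Pi.single r 1) (h : nu ∉ WeylChamber d) :
    ∃ i, i ≠ r ∧ nu i = nu r := by
  obtain ⟨hanti, hpos⟩ := hmu
  have hval : ∀ k, nu k = mu k + if k = r then 1 else 0 := by
    intro k; rw [hnu]; simp [Pi.single_apply]
  have hpos' : ∀ i, 0 < nu i := by
    intro i; rw [hval]; have := hpos i; split_ifs <;> omega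
  have : ¬ (∀ i j : Fin d, i < j → nu j < nu i) := by
    intro hA; exact h ⟨hA, hpos'⟩
  push_neg at this
  obtain ⟨i, j, hij, hle⟩ := this
  rw [hval i, hval j] at hle
  by_cases hjr : j = r
  · subst hjr
    refine ⟨i, Fin.ne_of_lt hij, ?_⟩
    rw [hval i, hval j]
    have := hanti i j hij
    rw [if_neg (Fin.ne_of_lt hij), if_pos rfl]
    omega
  · by_cases hir : i = r
    · subst hir
      have := hanti i j hij
      rw [if_pos rfl, if_neg hjr] at hle
      omega
    · have := hanti i j hij
      rw [if_neg hir, if_neg hjr] at hle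
      omega

lemma not_mem_sub {d : ℕ} {mu nu : Fin d → ℤ} (hmu : mu ∈ WeylChamber d) (r : Fin d)
    (hnu : nu = mu - Pi.single r 1) (h : nu ∉ WeylChamber d) :
    (∃ i, i ≠ r ∧ nu i = nu r) ∨ nu r = 0 := by
  obtain ⟨hanti, hpos⟩ := hmu
  have hval : ∀ k, nu k = mu k - if k = r then 1 else 0 := by
    intro k; rw [hnu]; simp [Pi.single_apply]
  by_cases hz : nu r = 0
  · exact Or.inr hz
  refine Or.inl ?_
  have hpos' : ∀ i, 0 < nu i := by
    intro i
    rw [hval]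
    by_cases hir : i = r
    · rw [if_pos hir]
      have h1 := hpos i
      have h2 : mu i - 1 ≠ 0 := by rw [hval r, if_pos rfl] at hz; rw [hir]; exact hz
      omega
    · rw [if_neg hir]; simpa using hpos i
  have : ¬ (∀ i j : Fin d, i < j → nu j < nu i) := by
    intro hA; exact h ⟨hA, hpos'⟩
  push_neg at this
  obtain ⟨i, j, hij, hle⟩ := this
  rw [hval i, hval j] at hle
  by_cases hir : i = r
  · subst hir
    refine ⟨j, fun hji => (Fin.ne_of_lt hij) hji.symm, ?_⟩
    rw [hval j, hval i]
    have := hanti i j hij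
    rw [if_neg (fun hji => (Fin.ne_of_lt hij) hji.symm), if_pos rfl]
    omega
  · by_cases hjr : j = r
    · subst hjr
      have := hanti i j hij
      rw [if_neg hir, if_pos rfl] at hle
      omega
    · have := hanti i j hij
      rw [if_neg hir, if_neg hjr] at hle
      omega

lemma det01 {d : ℕ} {lam mu : Fin d → ℤ} (hlam : lam ∈ WeylChamber d)
    (hmu : mu ∈ WeylChamber d) :
    Matrix.det (Matrix.of fun i j : Fin d => if mu i = lam j then (1:ℚ) else 0)
      = if lam = mu then 1 else 0 := by
  have anti_inj : ∀ (x : Fin d → ℤ), (∀ i j : Fin d, i < j → x j < x i) →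
      Function.Injective x := by
    intro x hx a b hab
    by_contra hne
    rcases lt_or_gt_of_ne hne with h | h
    · exact absurd hab (by have := hx a b h; omega)
    · exact absurd hab (by have := hx b a h; omega)
  split_ifs with h
  · subst h
    have : (Matrix.of fun i j : Fin d => if lam i = lam j then (1:ℚ) else 0) = 1 := by
      ext i j
      rw [Matrix.one_apply, Matrix.of_apply]
      by_cases hij : i = j
      · rw [if_pos (by rw [hij]), if_pos hij]
      · rw [if_neg (fun hv => hij (anti_inj lam hlam.1 hv)), if_neg hij]
    rw [this, Matrix.det_one]
  · by_contra hdet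
    rw [Matrix.det_apply'] at hdet
    obtain ⟨σ, -, hσ⟩ := Finset.exists_ne_zero_of_sum_ne_zero hdet
    have hprod : ∀ i, (Matrix.of fun i j : Fin d => if mu i = lam j then (1:ℚ) else 0) (σ i) i ≠ 0 := by
      intro i
      intro hzero
      exact hσ (mul_eq_zero_of_right _ (Finset.prod_eq_zero (Finset.mem_univ i) hzero))
    have heq : ∀ i, mu (σ i) = lam i := by
      intro i
      have := hprod i
      rw [Matrix.of_apply] at this
      by_contra hne
      rw [if_neg hne] at this
      exact this rfl
    have hmono : StrictMono σ := by
      intro a b hab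
      have h1 : lam b < lam a := hlam.1 a b hab
      rw [← heq a, ← heq b] at h1
      rcases lt_trichotomy (σ a) (σ b) with h' | h' | h'
      · exact h'
      · rw [h'] at h1; omega
      · have := hmu.1 (σ b) (σ a) h'; omega
    have hid : ∀ i, σ i = i := by
      intro i
      have h1 : ((StrictMono.orderIsoOfSurjective (⇑σ) hmono σ.surjective) i : ℕ) = (i : ℕ) :=
        Fin.coe_orderIso_apply _ i
      have h2 : (StrictMono.orderIsoOfSurjective (⇑σ) hmono σ.surjective) i = σ i :=
        congrFun (StrictMono.coe_orderIsoOfSurjective (⇑σ) hmono σ.surjective) i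
      apply Fin.ext
      rw [← h2, h1]
    apply h
    funext i
    rw [← heq i, hid i]



noncomputable def Dmat (d : ℕ) (lam mu : Fin d → ℤ) : Matrix (Fin d) (Fin d) (PowerSeries ℚ) :=
  Matrix.of fun i j => besselI (mu i - lam j) - besselI (mu i + lam j)

lemma constantCoeff_besselI (s : ℤ) :
    PowerSeries.constantCoeff (R := ℚ) (besselI s) = if s = 0 then 1 else 0 := by
  rw [← PowerSeries.coeff_zero_eq_constantCoeff_apply, coeff_besselI, Finset.sum_range_one]
  norm_num
  exact if_congr (by omega) rfl rfl

lemma det_Dmat_row_eq {d : ℕ} (lam nu : Fin d → ℤ) (i r : Fin d) (hir : i ≠ r)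
    (hv : nu i = nu r) : (Dmat d lam nu).det = 0 := by
  refine Matrix.det_zero_of_row_eq hir (funext fun j => ?_)
  show besselI (nu i - lam j) - besselI (nu i + lam j) = besselI (nu r - lam j) - besselI (nu r + lam j)
  rw [hv]

lemma det_Dmat_row_zero {d : ℕ} (lam nu : Fin d → ℤ) (r : Fin d)
    (hv : nu r = 0) : (Dmat d lam nu).det = 0 := by
  refine Matrix.det_eq_zero_of_row_eq_zero r fun j => ?_
  show besselI (nu r - lam j) - besselI (nu r + lam j) = 0
  rw [hv, zero_sub, zero_add, besselI_neg, sub_self]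

lemma deriv_det_Dmat (d : ℕ) (lam mu : Fin d → ℤ) :
    PowerSeries.derivative ℚ (Dmat d lam mu).det
      = ∑ r : Fin d, ((Dmat d lam (mu + Pi.single r 1)).det
          + (Dmat d lam (mu - Pi.single r 1)).det) := by
  rw [deriv_det]
  refine Finset.sum_congr rfl fun r _ => ?_
  have hupd : ∀ ν : Fin d → ℤ, (∀ i, i ≠ r → ν i = mu i) →
      (Dmat d lam mu).updateRow r (fun j => Dmat d lam ν r j) = Dmat d lam ν := by
    intro ν hν
    refine Matrix.ext fun i j => ?_
    rw [Matrix.updateRow_apply]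
    by_cases hir : i = r
    · simp [hir]
    · rw [if_neg hir]
      show besselI (mu i - lam j) - besselI (mu i + lam j)
        = besselI (ν i - lam j) - besselI (ν i + lam j)
      rw [hν i hir]
  have hrow : (fun j => PowerSeries.derivative ℚ (Dmat d lam mu r j))
      = (fun j => Dmat d lam (mu + Pi.single r 1) r j)
        + (fun j => Dmat d lam (mu - Pi.single r 1) r j) := by
    funext j
    show PowerSeries.derivative ℚ (besselI (mu r - lam j) - besselI (mu r + lam j))
      = (besselI ((mu + Pi.single r 1 : Fin d → ℤ) r - lam j)
          - besselI ((mu + Pi.single r 1 : Fin d → ℤ) r + lam j))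
        + (besselI ((mu - Pi.single r 1 : Fin d → ℤ) r - lam j)
          - besselI ((mu - Pi.single r 1 : Fin d → ℤ) r + lam j))
    have e1 : (mu + Pi.single r 1 : Fin d → ℤ) r = mu r + 1 := by simp
    have e2 : (mu - Pi.single r 1 : Fin d → ℤ) r = mu r - 1 := by simp
    rw [e1, e2, map_sub, derivative_besselI, derivative_besselI,
      show mu r + 1 - lam j = mu r - lam j + 1 from by ring,
      show mu r + 1 + lam j = mu r + lam j + 1 from by ring,
      show mu r - 1 - lam j = mu r - lam j - 1 from by ring,
      show mu r - 1 + lam j = mu r + lam j - 1 from by ring]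
    abel
  rw [hrow, Matrix.det_updateRow_add,
    hupd (mu + Pi.single r 1) (fun i hi => by simp [Pi.single_eq_of_ne hi]),
    hupd (mu - Pi.single r 1) (fun i hi => by simp [Pi.single_eq_of_ne hi])]

/-- **Grabiner–Magyar determinant formula.**  For `d ≥ 1` and `λ, μ ∈ W^d`, the
number `b_n(λ;μ)` of Weyl oscillating lattice walks of length `n` from `λ` to `μ`
equals `n!` times the coefficient of `t^n` in
`det( I_{μ_i - λ_j}(2t) - I_{μ_i + λ_j}(2t) )_{1 ≤ i,j ≤ d}`. -/
theorem grabiner_magyar (d : ℕ) (hd : 1 ≤ d) (lam mu : Fin d → ℤ)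
    (hlam : lam ∈ WeylChamber d) (hmu : mu ∈ WeylChamber d) (n : ℕ) :
    (oscWalkCount d n lam mu : ℚ) =
      n.factorial *
        PowerSeries.coeff (R := ℚ) n
          (Matrix.det (Matrix.of fun i j : Fin d =>
            besselI (mu i - lam j) - besselI (mu i + lam j))) := by
  show (oscWalkCount d n lam mu : ℚ) = n.factorial * PowerSeries.coeff (R := ℚ) n (Dmat d lam mu).det
  induction n generalizing mu hmu with
  | zero =>
    show (Nat.card (Walks d 0 lam mu) : ℚ) = _
    rw [card_walks_zero d lam mu hlam, Nat.factorial_zero, Nat.cast_one, one_mul,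
      PowerSeries.coeff_zero_eq_constantCoeff_apply, RingHom.map_det]
    have hmap : (PowerSeries.constantCoeff (R := ℚ)).mapMatrix (Dmat d lam mu)
        = Matrix.of fun i j : Fin d => if mu i = lam j then (1:ℚ) else 0 := by
      refine Matrix.ext fun i j => ?_
      show PowerSeries.constantCoeff (R := ℚ) (besselI (mu i - lam j) - besselI (mu i + lam j)) = _
      rw [map_sub, constantCoeff_besselI, constantCoeff_besselI]
      have h2 : ¬ (mu i + lam j = 0) := by
        have := hmu.2 i; have := hlam.2 j; omega
      rw [if_neg h2, sub_zero, Matrix.of_apply]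
      exact if_congr sub_eq_zero rfl rfl
    rw [hmap, det01 hlam hmu]
    split_ifs <;> simp
  | succ n ih =>
    show (Nat.card (Walks d (n+1) lam mu) : ℚ) = _
    rw [card_walks_succ d n lam mu hmu]
    push_cast
    have hterm : ∀ r : Fin d,
        ((Nat.card (Walks d n lam (mu + Pi.single r 1)) : ℚ)
          + (Nat.card (Walks d n lam (mu - Pi.single r 1)) : ℚ))
        = (n.factorial : ℚ) * (PowerSeries.coeff (R := ℚ) n
              ((Dmat d lam (mu + Pi.single r 1)).det + (Dmat d lam (mu - Pi.single r 1)).det)) := by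
      intro r
      rw [map_add, mul_add]
      congr 1
      · by_cases hw : (mu + Pi.single r 1 : Fin d → ℤ) ∈ WeylChamber d
        · exact ih (mu + Pi.single r 1) hw
        · obtain ⟨i, hir, hv⟩ := not_mem_add hmu r rfl hw
          rw [card_walks_notmem d n lam _ hw, det_Dmat_row_eq lam _ i r hir hv,
            map_zero, mul_zero, Nat.cast_zero]
      · by_cases hw : (mu - Pi.single r 1 : Fin d → ℤ) ∈ WeylChamber d
        · exact ih (mu - Pi.single r 1) hw
        · rcases not_mem_sub hmu r rfl hw with ⟨i, hir, hv⟩ | hz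
          · rw [card_walks_notmem d n lam _ hw, det_Dmat_row_eq lam _ i r hir hv,
              map_zero, mul_zero, Nat.cast_zero]
          · rw [card_walks_notmem d n lam _ hw, det_Dmat_row_zero lam _ r hz,
              map_zero, mul_zero, Nat.cast_zero]
    rw [Finset.sum_congr rfl fun r _ => hterm r, ← Finset.mul_sum, ← map_sum,
      ← deriv_det_Dmat d lam mu, PowerSeries.coeff_derivative]
    rw [Nat.factorial_succ]
    push_cast
    ring
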